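/- Let n ≥ 4 and let G be a graph on n vertices such that in the K_4-bootstrap process starting from G, the graph G_{n−3} is complete and G_{n−3} ≠ G_{n−4}. Let xy be an edge of G_{n−3} \ G_{n−4}, let z be a new vertex, and let G⁺ = G + xz + yz be the graph on n + 1 vertices obtained by adding z joined to x and y. Then the K_4-bootstrap process starting from G⁺ satisfies: G⁺_{n−2} is the complete graph on n + 1 vertices and G⁺_{n−2} ≠ G⁺_{n−3}, i.e. the process stabilizes at time exactly n − 2 with complete final graph. -/

import Mathlib

/-- One step of the `K_r`-bootstrap percolation process: we add every edge `uv` for which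
there is an `r`-element vertex set `S` containing `u` and `v` such that every edge within `S`
other than `uv` is already present. -/
def bootStep {V : Type*} (r : ℕ) (G : SimpleGraph V) : SimpleGraph V where
  Adj u v := G.Adj u v ∨ (u ≠ v ∧ ∃ S : Finset V, S.card = r ∧ u ∈ S ∧ v ∈ S ∧
    ∀ x ∈ S, ∀ y ∈ S, x ≠ y → ¬((x = u ∧ y = v) ∨ (x = v ∧ y = u)) → G.Adj x y)
  symm := by
    refine ⟨fun a b h => ?_⟩
    rcases h with h | ⟨hne, S, hS, ha, hb, hall⟩
    · exact Or.inl h.symm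
    · refine Or.inr ⟨hne.symm, S, hS, hb, ha, ?_⟩
      intro x hx y hy hxy hno
      exact hall x hx y hy hxy (by tauto)
  loopless := by
    refine ⟨fun a h => ?_⟩
    rcases h with h | ⟨hne, _⟩
    · exact (G.ne_of_adj h) rfl
    · exact hne rfl

lemma bootStep_adj {V : Type*} (r : ℕ) (G : SimpleGraph V) (u v : V) :
    (bootStep r G).Adj u v ↔ G.Adj u v ∨ (u ≠ v ∧ ∃ S : Finset V, S.card = r ∧ u ∈ S ∧ v ∈ S ∧
      ∀ x ∈ S, ∀ y ∈ S, x ≠ y → ¬((x = u ∧ y = v) ∨ (x = v ∧ y = u)) → G.Adj x y) := Iff.rfl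

lemma le_bootStep {V : Type*} (r : ℕ) (G : SimpleGraph V) : G ≤ bootStep r G :=
  fun _ _ h => Or.inl h

lemma bootStep_mono {V : Type*} (r : ℕ) {G H : SimpleGraph V} (hGH : G ≤ H) :
    bootStep r G ≤ bootStep r H := by
  intro u v h
  rcases h with h | ⟨hne, S, hS, hu, hv, hall⟩
  · exact Or.inl (hGH h)
  · exact Or.inr ⟨hne, S, hS, hu, hv, fun a ha b hb hab hno => hGH (hall a ha b hb hab hno)⟩

lemma iterate_bootStep_mono {V : Type*} (r : ℕ) (G : SimpleGraph V) :
    ∀ {s t : ℕ}, s ≤ t → (bootStep r)^[s] G ≤ (bootStep r)^[t] G := by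
  intro s t hst
  induction t with
  | zero => simp [Nat.le_zero.mp hst]
  | succ t ih =>
    rcases Nat.lt_or_ge s (t+1) with h | h
    · calc (bootStep r)^[s] G ≤ (bootStep r)^[t] G := ih (Nat.lt_succ_iff.mp h)
        _ ≤ bootStep r ((bootStep r)^[t] G) := le_bootStep r _
        _ = (bootStep r)^[t+1] G := (Function.iterate_succ_apply' _ _ _).symm
    · have : s = t+1 := le_antisymm hst h
      subst this; exact le_rfl


set_option maxHeartbeats 2000000 in
/-- Extending a graph on `n` vertices by a new vertex `z` joined to the two endpoints `x, y`
of an edge appearing at the last step: if the `K_4`-bootstrap process starting from `G`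
(a graph on the `n` vertices `≠ z`, with `z` isolated) has `G_{n-3}` equal to the complete
graph on the `n` old vertices, with the edge `xy` present at time `n-3` but not at time
`n-4`, then the process started from `G⁺ = G + xz + yz` has `G⁺_{n-2}` complete (on all
`n+1` vertices) and `G⁺_{n-2} ≠ G⁺_{n-3}`: it stabilizes at time exactly `n - 2` with
complete final graph. -/
theorem step_up_construction {V : Type*} [Fintype V] (n : ℕ) (hn : 4 ≤ n)
    (hcard : Fintype.card V = n + 1) (G : SimpleGraph V) (x y z : V)
    (hz : ∀ u, ¬ G.Adj z u)
    (hcomplete : ∀ u v, ((bootStep 4)^[n - 3] G).Adj u v ↔ (u ≠ v ∧ u ≠ z ∧ v ≠ z))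
    (hxy : ((bootStep 4)^[n - 3] G).Adj x y ∧ ¬ ((bootStep 4)^[n - 4] G).Adj x y) :
    (bootStep 4)^[n - 2] (G ⊔ SimpleGraph.fromEdgeSet {s(x, z), s(y, z)}) = ⊤ ∧
    (bootStep 4)^[n - 2] (G ⊔ SimpleGraph.fromEdgeSet {s(x, z), s(y, z)}) ≠
      (bootStep 4)^[n - 3] (G ⊔ SimpleGraph.fromEdgeSet {s(x, z), s(y, z)}) := by
  classical
  set E : SimpleGraph V := SimpleGraph.fromEdgeSet {s(x, z), s(y, z)} with hEdef
  obtain ⟨hxyadj, hxylate⟩ := hxy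
  have hxyz := (hcomplete x y).mp hxyadj
  obtain ⟨hxney, hxnez, hynez⟩ := hxyz
  -- adjacency in E
  have hE : ∀ u v : V, E.Adj u v ↔
      ((u = x ∧ v = z) ∨ (u = z ∧ v = x) ∨ (u = y ∧ v = z) ∨ (u = z ∧ v = y)) := by
    intro u v
    rw [hEdef, SimpleGraph.fromEdgeSet_adj]
    simp only [Set.mem_insert_iff, Set.mem_singleton_iff, Sym2.eq_iff]
    constructor
    · rintro ⟨h, hne⟩; tauto
    · rintro (⟨rfl, rfl⟩ | ⟨rfl, rfl⟩ | ⟨rfl, rfl⟩ | ⟨rfl, rfl⟩)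
      · exact ⟨by tauto, hxnez⟩
      · exact ⟨by tauto, Ne.symm hxnez⟩
      · exact ⟨by tauto, hynez⟩
      · exact ⟨by tauto, Ne.symm hynez⟩
  -- z is isolated in all G_t, t ≤ n-3
  have hziso : ∀ t ≤ n - 3, ∀ u, ¬ ((bootStep 4)^[t] G).Adj z u := by
    intro t ht u h
    exact ((hcomplete z u).mp (iterate_bootStep_mono 4 G ht h)).2.1 rfl
  -- xy absent in all G_t, t ≤ n-4
  have hxyt : ∀ t ≤ n - 4, ¬ ((bootStep 4)^[t] G).Adj x y := by
    intro t ht h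
    exact hxylate (iterate_bootStep_mono 4 G ht h)
  -- key structural lemma
  have key : ∀ t ≤ n - 3, (bootStep 4)^[t] (G ⊔ E) = (bootStep 4)^[t] G ⊔ E := by
    intro t ht
    induction t with
    | zero => simp
    | succ t ih =>
      have ht' : t ≤ n - 3 := le_trans (Nat.le_succ t) ht
      have ih := ih ht'
      have ht4 : t ≤ n - 4 := by omega
      set Gt : SimpleGraph V := (bootStep 4)^[t] G with hGt
      have hzt : ∀ u, ¬ Gt.Adj z u := hziso t ht'
      have hxynot : ¬ Gt.Adj x y := hxyt t ht4
      rw [Function.iterate_succ_apply', Function.iterate_succ_apply', ih]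
      -- contradiction whenever z ∈ S for a new edge u—z
      have noz : ∀ (u : V) (S : Finset V), S.card = 4 → u ∈ S → z ∈ S → u ≠ z →
          (∀ a ∈ S, ∀ b ∈ S, a ≠ b →
            ¬((a = u ∧ b = z) ∨ (a = z ∧ b = u)) → (Gt ⊔ E).Adj a b) → False := by
        intro u S hS hu hzS huz hall
        have hmem : ∀ a ∈ S, a ≠ z → a ≠ u → a = x ∨ a = y := by
          intro a ha haz hau
          have hadj := hall a ha z hzS haz (by
            rintro (⟨h1, -⟩ | ⟨h1, -⟩)
            · exact hau h1
            · exact haz h1)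
          rcases hadj with h | h
          · exact absurd h.symm (hzt a)
          · rcases (hE a z).mp h with ⟨h1, -⟩ | ⟨h1, h2⟩ | ⟨h1, -⟩ | ⟨h1, h2⟩
            · exact Or.inl h1
            · exact absurd h2.symm hxnez
            · exact Or.inr h1
            · exact absurd h2.symm hynez
        have hsub : S ⊆ {u, x, y, z} := by
          intro a ha
          simp only [Finset.mem_insert, Finset.mem_singleton]
          by_cases h1 : a = z
          · tauto
          by_cases h2 : a = u
          · tauto
          · rcases hmem a ha h1 h2 with h | h <;> tauto
        by_cases hu' : u = x ∨ u = y
        · have hsub' : S ⊆ {x, y, z} := by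
            intro a ha
            have := hsub ha
            simp only [Finset.mem_insert, Finset.mem_singleton] at this ⊢
            rcases hu' with rfl | rfl <;> tauto
          have h3 : S.card ≤ ({x, y, z} : Finset V).card := Finset.card_le_card hsub'
          have h4 : ({x, y, z} : Finset V).card ≤ 3 := by
            apply le_trans (Finset.card_insert_le _ _)
            have := Finset.card_insert_le y ({z} : Finset V)
            simp at this ⊢
            omega
          omega
        · push_neg at hu'
          obtain ⟨hux, huy⟩ := hu'
          have hTcard : ({u, x, y, z} : Finset V).card = 4 := by
            rw [Finset.card_insert_of_notMem, Finset.card_insert_of_notMem,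
              Finset.card_insert_of_notMem, Finset.card_singleton]
            · simp [hynez]
            · simp [hxney, hxnez]
            · simp [hux, huy, huz]
          have hSeq : S = {u, x, y, z} :=
            Finset.eq_of_subset_of_card_le hsub (by omega)
          have hxS : x ∈ S := by rw [hSeq]; simp
          have hyS : y ∈ S := by rw [hSeq]; simp
          have hadj := hall x hxS y hyS hxney (by
            rintro (⟨h1, -⟩ | ⟨h1, -⟩)
            · exact hux h1.symm
            · exact hxnez h1)
          rcases hadj with h | h
          · exact hxynot h
          · rcases (hE x y).mp h with ⟨-, h2⟩ | ⟨h1, -⟩ | ⟨h1, -⟩ | ⟨h1, -⟩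
            · exact hynez h2
            · exact hxnez h1
            · exact hxney h1
            · exact hxnez h1
      ext u v
      constructor
      · rintro (h | ⟨hne, S, hS, hu, hv, hall⟩)
        · rcases h with h | h
          · exact Or.inl (Or.inl h)
          · exact Or.inr h
        · by_cases hzS : z ∈ S
          · by_cases huvz : u = z ∨ v = z
            · exfalso
              rcases huvz with rfl | rfl
              · exact noz v S hS hv hzS (Ne.symm hne)
                  (fun a ha b hb hab hno => hall a ha b hb hab (by tauto))
              · exact noz u S hS hu hzS hne hall
            · push_neg at huvz
              obtain ⟨huz, hvz⟩ := huvz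
              exfalso
              have hsub : S ⊆ {x, y, z} := by
                intro a ha
                by_cases haz : a = z
                · simp [haz]
                have hadj := hall z hzS a ha (Ne.symm haz) (by
                  rintro (⟨h1, -⟩ | ⟨h1, -⟩)
                  · exact huz h1.symm
                  · exact hvz h1.symm)
                simp only [Finset.mem_insert, Finset.mem_singleton]
                rcases hadj with h | h
                · exact absurd h (hzt a)
                · rcases (hE z a).mp h with ⟨h1, -⟩ | ⟨-, h2⟩ | ⟨h1, -⟩ | ⟨-, h2⟩
                  · exact absurd h1.symm hxnez
                  · tauto
                  · exact absurd h1.symm hynez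
                  · tauto
              have h3 : S.card ≤ ({x, y, z} : Finset V).card := Finset.card_le_card hsub
              have h4 : ({x, y, z} : Finset V).card ≤ 3 := by
                apply le_trans (Finset.card_insert_le _ _)
                have := Finset.card_insert_le y ({z} : Finset V)
                simp at this ⊢
                omega
              omega
          · refine Or.inl (Or.inr ⟨hne, S, hS, hu, hv, ?_⟩)
            intro a ha b hb hab hno
            rcases hall a ha b hb hab hno with h | h
            · exact h
            · exfalso
              rcases (hE a b).mp h with ⟨-, h2⟩ | ⟨h1, -⟩ | ⟨-, h2⟩ | ⟨h1, -⟩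
              · exact hzS (h2 ▸ hb)
              · exact hzS (h1 ▸ ha)
              · exact hzS (h2 ▸ hb)
              · exact hzS (h1 ▸ ha)
      · rintro (h | h)
        · exact bootStep_mono 4 (le_sup_left : Gt ≤ Gt ⊔ E) h
        · exact le_bootStep 4 _ (Or.inr h : (Gt ⊔ E).Adj u v)
  -- the graph at time n-3
  have step1 : (bootStep 4)^[n - 3] (G ⊔ E) = (bootStep 4)^[n - 3] G ⊔ E :=
    key (n - 3) le_rfl
  set Gf : SimpleGraph V := (bootStep 4)^[n - 3] G with hGf
  -- adjacency helpers for Gf ⊔ E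
  have hadjold : ∀ a b : V, a ≠ b → a ≠ z → b ≠ z → (Gf ⊔ E).Adj a b :=
    fun a b h1 h2 h3 => Or.inl ((hcomplete a b).mpr ⟨h1, h2, h3⟩)
  have hadjxz : (Gf ⊔ E).Adj x z := Or.inr ((hE x z).mpr (by tauto))
  have hadjyz : (Gf ⊔ E).Adj y z := Or.inr ((hE y z).mpr (by tauto))
  -- every u ≠ z is adjacent to z after one more step
  have hnz : ∀ u : V, u ≠ z → (bootStep 4 (Gf ⊔ E)).Adj u z := by
    intro u huz
    by_cases hux : u = x
    · exact Or.inl (hux ▸ hadjxz)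
    by_cases huy : u = y
    · exact Or.inl (huy ▸ hadjyz)
    · refine Or.inr ⟨huz, {u, x, y, z}, ?_, by simp, by simp, ?_⟩
      · rw [Finset.card_insert_of_notMem, Finset.card_insert_of_notMem,
          Finset.card_insert_of_notMem, Finset.card_singleton]
        · simp [hynez]
        · simp [hxney, hxnez]
        · simp [hux, huy, huz]
      · intro a ha b hb hab hno
        simp only [Finset.mem_insert, Finset.mem_singleton] at ha hb
        by_cases haz : a = z
        · subst haz
          rcases hb with rfl | rfl | rfl | rfl
          · exact absurd (Or.inr ⟨rfl, rfl⟩) hno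
          · exact hadjxz.symm
          · exact hadjyz.symm
          · exact absurd rfl hab
        · by_cases hbz : b = z
          · subst hbz
            rcases ha with rfl | rfl | rfl | rfl
            · exact absurd (Or.inl ⟨rfl, rfl⟩) hno
            · exact hadjxz
            · exact hadjyz
            · exact absurd rfl hab
          · exact hadjold a b hab haz hbz
  have hn2 : n - 2 = (n - 3) + 1 := by omega
  have htop : (bootStep 4)^[n - 2] (G ⊔ E) = ⊤ := by
    rw [hn2, Function.iterate_succ_apply', step1]
    ext u v
    simp only [SimpleGraph.top_adj]
    constructor
    · exact fun h => (SimpleGraph.Adj.ne h)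
    · intro huv
      by_cases hvz : v = z
      · subst hvz; exact hnz u huv
      by_cases huz : u = z
      · subst huz; exact (hnz v (Ne.symm huv)).symm
      · exact Or.inl (hadjold u v huv huz hvz)
  refine ⟨htop, ?_⟩
  -- find a vertex outside {x, y, z}
  have hw : ∃ w : V, w ∉ ({x, y, z} : Finset V) := by
    by_contra h
    push_neg at h
    have hsub : (Finset.univ : Finset V) ⊆ {x, y, z} := fun a _ => h a
    have h1 := Finset.card_le_card hsub
    rw [Finset.card_univ, hcard] at h1
    have h4 : ({x, y, z} : Finset V).card ≤ 3 := by
      apply le_trans (Finset.card_insert_le _ _)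
      have := Finset.card_insert_le y ({z} : Finset V)
      simp at this ⊢
      omega
    omega
  obtain ⟨w, hw⟩ := hw
  simp only [Finset.mem_insert, Finset.mem_singleton, not_or] at hw
  obtain ⟨hwx, hwy, hwz⟩ := hw
  intro heq
  rw [htop, step1] at heq
  have hzw : (Gf ⊔ E).Adj z w := by
    rw [← heq]
    exact fun h => (Ne.symm hwz) h |>.elim
  rcases hzw with h | h
  · exact ((hcomplete z w).mp h).2.1 rfl
  · rcases (hE z w).mp h with ⟨h1, -⟩ | ⟨-, h2⟩ | ⟨h1, -⟩ | ⟨-, h2⟩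
    · exact hxnez h1.symm
    · exact hwx h2
    · exact hynez h1.symm
    · exact hwy h2
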